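/- Let (U,F,t) be a Set Cover instance in which every element belongs to at least one set. If the subdivided-star gerrymandering instance constructed from (U,F,t) admits a district-partition into k = t+4 districts that is satisfying for the preferred candidate p, then there exists X ⊆ F with |X| ≤ t and ∪_{S∈X} S = U. -/

import Mathlib

attribute [local instance] Classical.propDecidable

/-- Candidate `c` *leads* district `D` (unweighted): `c`'s vote count is at least that of
every candidate. -/
def leadsIn {V C : Type*} (χ : V → C) (c : C) (D : Finset V) : Prop :=
  ∀ c' : C, (D.filter fun x => χ x = c').card ≤ (D.filter fun x => χ x = c).card

/-- Candidate `c` *wins* district `D` (unweighted): `c`'s vote count strictly exceeds that of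
every other candidate. -/
def winsIn {V C : Type*} (χ : V → C) (c : C) (D : Finset V) : Prop :=
  ∀ c' : C, c' ≠ c → (D.filter fun x => χ x = c').card < (D.filter fun x => χ x = c).card

/-- A district-partition of `G` into `k` districts: `k` pairwise-disjoint nonempty vertex sets
covering all vertices, each inducing a connected subgraph. -/
def IsDistrictPartition {V : Type*} (G : SimpleGraph V) (k : ℕ) (P : Finset (Finset V)) : Prop :=
  P.card = k ∧ (∀ D ∈ P, D.Nonempty) ∧
    (∀ D ∈ P, ∀ D' ∈ P, D ≠ D' → Disjoint D D') ∧
    (∀ x : V, ∃ D ∈ P, x ∈ D) ∧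
    (∀ D ∈ P, (G.induce (D : Set V)).Connected)

/-- A district-partition is *satisfying* for the preferred candidate `p` if `p` wins strictly
more districts than any other candidate leads. -/
def SatisfyingFor {V C : Type*} (χ : V → C) (p : C) (P : Finset (Finset V)) : Prop :=
  ∀ q : C, q ≠ p →
    (P.filter fun D => leadsIn χ q D).card < (P.filter fun D => winsIn χ p D).card

/-- Vertices of the subdivided-star gerrymandering instance: the root `r`; branch 1 vertices
`c_1, c_2, u_1, …, u_n`; branch 2 vertices `w_1, …, w_{t-1}`; and, on each of the `t`
selection branches `s`, the initial vertices `v_0^1, …, v_0^n` (constructor `v0`), the group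
vertices `x_i` and `v_i^j` for `i ∈ [m]` (group `g_i`), and the final vertices
`y_0, …, y_m`. -/
inductive VS (n m t : ℕ) : Type where
  | root
  | c1
  | c2
  | u (j : Fin n)
  | w (i : Fin (t - 1))
  | v0 (s : Fin t) (j : Fin n)
  | x (s : Fin t) (i : Fin m)
  | v (s : Fin t) (i : Fin m) (j : Fin n)
  | y (s : Fin t) (i : Fin (m + 1))
  deriving DecidableEq, Fintype

/-- Candidates of the subdivided-star instance: the preferred candidate `p`, the ally `q`,
element candidates `a_j` for `j ∈ [n]`, and branch candidates `b_s` for `s ∈ [t]`. -/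
inductive CS (n t : ℕ) : Type where
  | p
  | q
  | a (j : Fin n)
  | b (s : Fin t)
  deriving DecidableEq

/-- Candidate preferences of the subdivided-star instance. -/
def chiS {n m t : ℕ} : VS n m t → CS n t
  | .root => .q
  | .c1 => .p
  | .c2 => .p
  | .u j => .a j
  | .w _ => .q
  | .v0 _ j => .a j
  | .x _ _ => .q
  | .v _ _ j => .a j
  | .y s _ => .b s

/-- Position of each non-root vertex along its branch, as a pair
(branch index, 0-based distance from the root along the branch minus one); the vertex at
position 0 of each branch is adjacent to the root.  Branch 0 is `c_1, c_2, u_1, …, u_n`;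
branch 1 is `w_1, …, w_{t-1}`; branch `2 + s` is selection branch `s`, ordered as
`v_0^1, …, v_0^n`, then groups `g_1, …, g_m` (group `g_i` consists of the vertices `v_i^j`
with `e_j ∉ S_i` in increasing order of `j`, then `x_i`, then the vertices `v_i^j` with
`e_j ∈ S_i` in increasing order of `j`), then `y_0, …, y_m`. -/
def posS {n m t : ℕ} (S : Fin m → Finset (Fin n)) : VS n m t → Option (ℕ × ℕ)
  | .root => none
  | .c1 => some (0, 0)
  | .c2 => some (0, 1)
  | .u j => some (0, 2 + (j : ℕ))
  | .w i => some (1, (i : ℕ))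
  | .v0 s j => some (2 + (s : ℕ), (j : ℕ))
  | .x s i => some (2 + (s : ℕ), n + (i : ℕ) * (n + 1) + (n - (S i).card))
  | .v s i j => some (2 + (s : ℕ), n + (i : ℕ) * (n + 1) +
      (if j ∈ S i then n - (S i).card + 1 + ((S i).filter fun j' => j' < j).card
       else ((S i)ᶜ.filter fun j' => j' < j).card))
  | .y s i => some (2 + (s : ℕ), n + m * (n + 1) + (i : ℕ))

/-- The subdivided star: the root is adjacent to the vertex at position 0 of each branch, and
vertices at consecutive positions of the same branch are adjacent. -/
def GS {n m t : ℕ} (S : Fin m → Finset (Fin n)) : SimpleGraph (VS n m t) :=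
  SimpleGraph.fromRel (fun a b =>
    (a = VS.root ∧ ∃ br, posS S b = some (br, 0)) ∨
    (∃ br k, posS S a = some (br, k) ∧ posS S b = some (br, k + 1)))

/-- vote count of candidate `c` in district `D` -/
noncomputable def cnt {V C : Type*} (χ : V → C) (c : C) (D : Finset V) : ℕ :=
  (D.filter fun x => χ x = c).card

lemma leadsIn_iff {V C : Type*} (χ : V → C) (c : C) (D : Finset V) :
    leadsIn χ c D ↔ ∀ c' : C, cnt χ c' D ≤ cnt χ c D := Iff.rfl

lemma winsIn_iff {V C : Type*} (χ : V → C) (c : C) (D : Finset V) :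
    winsIn χ c D ↔ ∀ c' : C, c' ≠ c → cnt χ c' D < cnt χ c D := Iff.rfl

lemma one_le_cnt {V C : Type*} (χ : V → C) {c : C} {D : Finset V} {z : V}
    (hz : z ∈ D) (hc : χ z = c) : 1 ≤ cnt χ c D :=
  Finset.card_pos.mpr ⟨z, Finset.mem_filter.mpr ⟨hz, hc⟩⟩

lemma cnt_pos_elim {V C : Type*} (χ : V → C) {c : C} {D : Finset V}
    (h : 1 ≤ cnt χ c D) : ∃ z ∈ D, χ z = c := by
  obtain ⟨z, hz⟩ := Finset.card_pos.mp h
  rw [Finset.mem_filter] at hz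
  exact ⟨z, hz.1, hz.2⟩

lemma cnt_eq_zero {V C : Type*} (χ : V → C) {c : C} {D : Finset V}
    (h : ∀ z ∈ D, χ z ≠ c) : cnt χ c D = 0 := by
  rw [cnt, Finset.card_eq_zero, Finset.filter_eq_empty_iff]
  exact h

lemma cnt_subset {V C : Type*} (χ : V → C) {c : C} {D : Finset V} {T : Finset V}
    (h : ∀ z ∈ D, χ z = c → z ∈ T) : cnt χ c D ≤ T.card := by
  refine Finset.card_le_card ?_
  intro z hz
  rw [Finset.mem_filter] at hz
  exact h z hz.1 hz.2

lemma le_cnt_of_subset {V C : Type*} (χ : V → C) {c : C} {D : Finset V} {T : Finset V}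
    (h : ∀ z ∈ T, z ∈ D) (h' : ∀ z ∈ T, χ z = c) : T.card ≤ cnt χ c D := by
  refine Finset.card_le_card ?_
  intro z hz
  exact Finset.mem_filter.mpr ⟨h z hz, h' z hz⟩

lemma cnt_le_one {V C : Type*} (χ : V → C) {c : C} {D : Finset V}
    (h : ∀ w ∈ D, ∀ w' ∈ D, χ w = c → χ w' = c → w = w') : cnt χ c D ≤ 1 := by
  rw [cnt]
  refine Finset.card_le_one.mpr ?_
  intro w hw w' hw'
  rw [Finset.mem_filter] at hw hw'
  exact h w hw.1 w' hw'.1 hw.2 hw'.2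

lemma cnt_le_card {V C : Type*} (χ : V → C) (c : C) (D : Finset V) : cnt χ c D ≤ D.card :=
  Finset.card_le_card (Finset.filter_subset _ _)

section Generic

variable {V C : Type*}

/-- If `A` is closed under adjacency inside a connected district `D`, and meets `D`,
then it contains all of `D`. -/
lemma closed_of_connected (G : SimpleGraph V) (D : Finset V)
    (h : (G.induce (D : Set V)).Connected) (A : Set V)
    (hA : ∀ x ∈ D, ∀ y ∈ D, G.Adj x y → x ∈ A → y ∈ A)
    {a b : V} (ha : a ∈ D) (haA : a ∈ A) (hb : b ∈ D) : b ∈ A := by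
  have hreach := h.preconnected ⟨a, by simpa using ha⟩ ⟨b, by simpa using hb⟩
  obtain ⟨w⟩ := hreach
  have : ∀ (u v : (D : Set V)) (_ : (G.induce (D : Set V)).Walk u v),
      (u : V) ∈ A → (v : V) ∈ A := by
    intro u v w
    induction w with
    | nil => exact fun h => h
    | cons hadj _ ih =>
      rename_i x y z _
      intro hx
      refine ih ?_
      have : G.Adj (x : V) (y : V) := hadj
      exact hA x x.2 y y.2 this hx
  exact this _ _ w haA

lemma exists_leader (χ : V → C) (D : Finset V) (hD : D.Nonempty) :
    ∃ c : C, leadsIn χ c D ∧ 1 ≤ cnt χ c D := by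
  have himg : (D.image χ).Nonempty := hD.image χ
  obtain ⟨c, hc, hmax⟩ := Finset.exists_max_image (D.image χ) (fun c => cnt χ c D) himg
  refine ⟨c, ?_, ?_⟩
  · rw [leadsIn_iff]
    intro c'
    by_cases h : c' ∈ D.image χ
    · exact hmax c' h
    · have : cnt χ c' D = 0 := cnt_eq_zero χ (fun z hz hzc =>
        h (Finset.mem_image.mpr ⟨z, hz, hzc⟩))
      omega
  · obtain ⟨z, hz, hzc⟩ := Finset.mem_image.mp hc
    exact one_le_cnt χ hz hzc

end Generic
namespace StarAux

variable {n m t : ℕ} (S : Fin m → Finset (Fin n))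

/-- offset of `v s i j` inside its group -/
def off (i : Fin m) (j : Fin n) : ℕ :=
  if j ∈ S i then n - (S i).card + 1 + ((S i).filter fun j' => j' < j).card
  else ((S i)ᶜ.filter fun j' => j' < j).card

lemma posS_v (s : Fin t) (i : Fin m) (j : Fin n) :
    posS S (VS.v s i j) = some (2 + (s : ℕ), n + (i : ℕ) * (n + 1) + off S i j) := rfl

lemma card_le_n (i : Fin m) : (S i).card ≤ n := by
  simpa using Finset.card_le_univ (S i)

lemma compl_card (i : Fin m) : ((S i)ᶜ : Finset (Fin n)).card = n - (S i).card := by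
  simp [Finset.card_compl]

lemma off_le (i : Fin m) (j : Fin n) : off S i j ≤ n := by
  unfold off
  split
  · rename_i hj
    have h1 : ((S i).filter fun j' => j' < j).card ≤ (S i).card - 1 := by
      have hsub : ((S i).filter fun j' => j' < j) ⊆ (S i).erase j := by
        intro z hz
        rw [Finset.mem_filter] at hz
        exact Finset.mem_erase.mpr ⟨ne_of_lt hz.2, hz.1⟩
      calc ((S i).filter fun j' => j' < j).card ≤ ((S i).erase j).card :=
            Finset.card_le_card hsub
        _ = (S i).card - 1 := Finset.card_erase_of_mem hj
    have h2 : 1 ≤ (S i).card := Finset.card_pos.mpr ⟨j, ‹j ∈ S i›⟩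
    have := card_le_n S i
    omega
  · rename_i hj
    have h1 : (((S i)ᶜ).filter fun j' => j' < j).card ≤ ((S i)ᶜ : Finset (Fin n)).card := by
      exact Finset.card_le_card (Finset.filter_subset _ _)
    have := compl_card S i
    have := card_le_n S i
    omega

lemma off_lt_x {i : Fin m} {j : Fin n} (hj : j ∉ S i) : off S i j < n - (S i).card := by
  unfold off
  rw [if_neg hj]
  have hjc : j ∈ ((S i)ᶜ : Finset (Fin n)) := Finset.mem_compl.mpr hj
  have hsub : (((S i)ᶜ).filter fun j' => j' < j) ⊂ ((S i)ᶜ : Finset (Fin n)) := by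
    refine Finset.ssubset_iff_of_subset (Finset.filter_subset _ _) |>.mpr ?_
    exact ⟨j, hjc, by simp⟩
  have := Finset.card_lt_card hsub
  rw [compl_card S i] at this
  exact this

lemma off_gt_x {i : Fin m} {j : Fin n} (hj : j ∈ S i) : n - (S i).card < off S i j := by
  unfold off
  rw [if_pos hj]
  omega

lemma filter_lt_strict {T : Finset (Fin n)} {j j' : Fin n} (hj : j ∈ T) (hlt : j < j') :
    (T.filter fun z => z < j).card < (T.filter fun z => z < j').card := by
  refine Finset.card_lt_card ?_
  constructor
  · intro z hz
    rw [Finset.mem_filter] at hz ⊢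
    exact ⟨hz.1, lt_trans hz.2 hlt⟩
  · intro hsub
    have : j ∈ T.filter fun z => z < j := hsub (Finset.mem_filter.mpr ⟨hj, hlt⟩)
    rw [Finset.mem_filter] at this
    exact absurd this.2 (lt_irrefl j)

lemma off_inj (i : Fin m) {j j' : Fin n} (h : off S i j = off S i j') : j = j' := by
  by_contra hne
  rcases lt_or_gt_of_ne hne with hlt | hlt
  · by_cases hj : j ∈ S i <;> by_cases hj' : j' ∈ S i
    · unfold off at h; rw [if_pos hj, if_pos hj'] at h
      have := filter_lt_strict (T := S i) hj hlt; omega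
    · have h1 := off_gt_x S hj
      have h2 := off_lt_x S hj'
      omega
    · have h1 := off_lt_x S hj
      have h2 := off_gt_x S hj'
      omega
    · unfold off at h; rw [if_neg hj, if_neg hj'] at h
      have := filter_lt_strict (T := (S i)ᶜ) (Finset.mem_compl.mpr hj) hlt; omega
  · by_cases hj : j ∈ S i <;> by_cases hj' : j' ∈ S i
    · unfold off at h; rw [if_pos hj, if_pos hj'] at h
      have := filter_lt_strict (T := S i) hj' hlt; omega
    · have h1 := off_gt_x S hj
      have h2 := off_lt_x S hj'
      omega
    · have h1 := off_lt_x S hj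
      have h2 := off_gt_x S hj'
      omega
    · unfold off at h; rw [if_neg hj, if_neg hj'] at h
      have := filter_lt_strict (T := (S i)ᶜ) (Finset.mem_compl.mpr hj') hlt; omega

/-- decode of group blocks -/
lemma block_decode {i i' c c' : ℕ} (hc : c ≤ n) (hc' : c' ≤ n)
    (h : n + i * (n + 1) + c = n + i' * (n + 1) + c') : i = i' ∧ c = c' := by
  rcases lt_trichotomy i i' with hlt | heq | hlt
  · have : i * (n+1) + (n+1) ≤ i' * (n+1) := by
      have := Nat.mul_le_mul_right (n+1) (Nat.succ_le_of_lt hlt)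
      simpa [Nat.succ_mul] using this
    omega
  · constructor
    · exact heq
    · subst heq; omega
  · have : i' * (n+1) + (n+1) ≤ i * (n+1) := by
      have := Nat.mul_le_mul_right (n+1) (Nat.succ_le_of_lt hlt)
      simpa [Nat.succ_mul] using this
    omega

lemma group_lt_y (i : Fin m) {c : ℕ} (hc : c ≤ n) (k : ℕ) :
    n + (i : ℕ) * (n + 1) + c < n + m * (n + 1) + k := by
  have : (i : ℕ) * (n+1) + (n+1) ≤ m * (n+1) := by
    have := Nat.mul_le_mul_right (n+1) (Nat.succ_le_of_lt i.isLt)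
    simpa [Nat.succ_mul] using this
  omega

lemma blocks_lt {k i' : ℕ} (c c' : ℕ) (hc : c ≤ n) (hki : k < i') :
    n + k * (n + 1) + c < n + i' * (n + 1) + c' := by
  have : k * (n+1) + (n+1) ≤ i' * (n+1) := by
    have := Nat.mul_le_mul_right (n+1) (Nat.succ_le_of_lt hki)
    simpa [Nat.succ_mul] using this
  omega

end StarAux
namespace StarAux

variable {n m t : ℕ} (S : Fin m → Finset (Fin n))

/-- membership in selection branch `s` -/
def InB (s : Fin t) (z : VS n m t) : Prop := ∃ h : ℕ, posS S z = some (2 + (s : ℕ), h)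

lemma branch0_char {z : VS n m t} {h : ℕ} (hz : posS S z = some (0, h)) :
    (z = VS.c1 ∧ h = 0) ∨ (z = VS.c2 ∧ h = 1) ∨ (∃ j : Fin n, z = VS.u j ∧ h = 2 + (j : ℕ)) := by
  cases z <;>
    simp only [posS, Option.some.injEq, Prod.mk.injEq, reduceCtorEq] at hz <;>
    rcases hz with ⟨h1, h2⟩ <;>
    [skip; skip; skip; skip; skip; skip; skip; skip]
  · exact Or.inl ⟨rfl, h2.symm⟩
  · exact Or.inr (Or.inl ⟨rfl, h2.symm⟩)
  · rename_i j; exact Or.inr (Or.inr ⟨j, rfl, h2.symm⟩)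
  · first | omega | exact h1.elim
  · first | omega | exact h1.elim
  · first | omega | exact h1.elim
  · first | omega | exact h1.elim
  · first | omega | exact h1.elim

lemma branch1_char {z : VS n m t} {h : ℕ} (hz : posS S z = some (1, h)) :
    ∃ i : Fin (t-1), z = VS.w i ∧ h = (i : ℕ) := by
  cases z <;>
    simp only [posS, Option.some.injEq, Prod.mk.injEq, reduceCtorEq] at hz <;>
    rcases hz with ⟨h1, h2⟩ <;>
    [skip; skip; skip; skip; skip; skip; skip; skip]
  · first | omega | exact h1.elim
  · first | omega | exact h1.elim
  · first | omega | exact h1.elim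
  · rename_i i; exact ⟨i, rfl, h2.symm⟩
  · first | omega | exact h1.elim
  · first | omega | exact h1.elim
  · first | omega | exact h1.elim
  · first | omega | exact h1.elim

lemma branchS_char {z : VS n m t} {s : Fin t} {h : ℕ}
    (hz : posS S z = some (2 + (s : ℕ), h)) :
    (∃ j : Fin n, z = VS.v0 s j ∧ h = (j : ℕ)) ∨
    (∃ i : Fin m, z = VS.x s i ∧ h = n + (i : ℕ) * (n+1) + (n - (S i).card)) ∨
    (∃ (i : Fin m) (j : Fin n), z = VS.v s i j ∧ h = n + (i : ℕ) * (n+1) + off S i j) ∨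
    (∃ i : Fin (m+1), z = VS.y s i ∧ h = n + m * (n+1) + (i : ℕ)) := by
  cases z with
  | root => simp [posS] at hz
  | c1 => simp only [posS, Option.some.injEq, Prod.mk.injEq] at hz; omega
  | c2 => simp only [posS, Option.some.injEq, Prod.mk.injEq] at hz; omega
  | u j => simp only [posS, Option.some.injEq, Prod.mk.injEq] at hz; omega
  | w i => simp only [posS, Option.some.injEq, Prod.mk.injEq] at hz; omega
  | v0 s' j =>
      simp only [posS, Option.some.injEq, Prod.mk.injEq] at hz
      have hs : s' = s := Fin.val_injective (by omega)
      subst hs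
      exact Or.inl ⟨j, rfl, hz.2.symm⟩
  | x s' i =>
      simp only [posS, Option.some.injEq, Prod.mk.injEq] at hz
      have hs : s' = s := Fin.val_injective (by omega)
      subst hs
      exact Or.inr (Or.inl ⟨i, rfl, hz.2.symm⟩)
  | v s' i j =>
      rw [posS_v] at hz
      simp only [Option.some.injEq, Prod.mk.injEq] at hz
      have hs : s' = s := Fin.val_injective (by omega)
      subst hs
      exact Or.inr (Or.inr (Or.inl ⟨i, j, rfl, hz.2.symm⟩))
  | y s' i =>
      simp only [posS, Option.some.injEq, Prod.mk.injEq] at hz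
      have hs : s' = s := Fin.val_injective (by omega)
      subst hs
      exact Or.inr (Or.inr (Or.inr ⟨i, rfl, hz.2.symm⟩))

/-- injectivity of positions within a selection branch -/
lemma branchS_inj {z z' : VS n m t} {s : Fin t} {h : ℕ}
    (hz : posS S z = some (2 + (s : ℕ), h)) (hz' : posS S z' = some (2 + (s : ℕ), h)) :
    z = z' := by
  have hxle : ∀ i : Fin m, n - (S i).card ≤ n := fun i => by omega
  rcases branchS_char S hz with ⟨j, rfl, rfl⟩ | ⟨i, rfl, rfl⟩ | ⟨i, j, rfl, rfl⟩ | ⟨i, rfl, rfl⟩ <;>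
    rcases branchS_char S hz' with ⟨j', rfl, hh⟩ | ⟨i', rfl, hh⟩ | ⟨i', j', rfl, hh⟩ | ⟨i', rfl, hh⟩
  · have : j = j' := Fin.val_injective hh
    rw [this]
  · exact absurd hh (by have := j.isLt; omega)
  · exact absurd hh (by have := j.isLt; have := off_le S i' j'; omega)
  · exact absurd hh (by have := j.isLt; omega)
  · exact absurd hh (by have := j'.isLt; omega)
  · obtain ⟨h1, h2⟩ := block_decode (hxle i) (hxle i') hh
    have : i = i' := Fin.val_injective h1
    rw [this]
  · obtain ⟨h1, h2⟩ := block_decode (hxle i) (off_le S i' j') hh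
    have hii : i = i' := Fin.val_injective h1
    subst hii
    by_cases hj : j' ∈ S i
    · exact absurd h2 (by have := off_gt_x S hj; omega)
    · exact absurd h2 (by have := off_lt_x S hj; omega)
  · exact absurd hh (group_lt_y (i := i) (hxle i) (i' : ℕ) |>.ne)
  · exact absurd hh (by have := j'.isLt; have := off_le S i j; omega)
  · obtain ⟨h1, h2⟩ := block_decode (off_le S i j) (hxle i') hh
    have hii : i = i' := Fin.val_injective h1
    subst hii
    by_cases hj : j ∈ S i
    · exact absurd h2 (by have := off_gt_x S hj; omega)
    · exact absurd h2 (by have := off_lt_x S hj; omega)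
  · obtain ⟨h1, h2⟩ := block_decode (off_le S i j) (off_le S i' j') hh
    have hii : i = i' := Fin.val_injective h1
    subst hii
    have : j = j' := off_inj S i h2
    rw [this]
  · exact absurd hh (group_lt_y (i := i) (off_le S i j) (i' : ℕ) |>.ne)
  · exact absurd hh (by have := j'.isLt; omega)
  · exact absurd hh (group_lt_y (i := i') (hxle i') (i : ℕ) |>.ne')
  · exact absurd hh (group_lt_y (i := i') (off_le S i' j') (i : ℕ) |>.ne')
  · have : i = i' := Fin.val_injective (by omega)
    rw [this]

end StarAux
namespace StarAux

variable {n m t : ℕ} (S : Fin m → Finset (Fin n))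

lemma adj_cases {a b : VS n m t} (h : (GS S).Adj a b) :
    (a = VS.root ∧ ∃ br, posS S b = some (br, 0)) ∨
    (b = VS.root ∧ ∃ br, posS S a = some (br, 0)) ∨
    (∃ br k, posS S a = some (br, k) ∧ posS S b = some (br, k + 1)) ∨
    (∃ br k, posS S b = some (br, k) ∧ posS S a = some (br, k + 1)) := by
  rw [GS, SimpleGraph.fromRel_adj] at h
  rcases h.2 with (h' | h') | (h' | h')
  · exact Or.inl h'
  · exact Or.inr (Or.inr (Or.inl h'))
  · exact Or.inr (Or.inl h')
  · exact Or.inr (Or.inr (Or.inr h'))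

lemma posS_root : posS S (VS.root : VS n m t) = none := rfl

/-- downward closure of the root district along a selection branch -/
lemma mem_of_le_height {D : Finset (VS n m t)}
    (hconn : ((GS S).induce (D : Set (VS n m t))).Connected) (hroot : VS.root ∈ D)
    {z z' : VS n m t} {s : Fin t} {h h' : ℕ}
    (hz : posS S z = some (2 + (s : ℕ), h)) (hzD : z ∈ D)
    (hz' : posS S z' = some (2 + (s : ℕ), h')) (hlt : h' < h) : z' ∈ D := by
  by_contra hz'D
  set A : Set (VS n m t) := {y | ∃ h'', h' < h'' ∧ posS S y = some (2 + (s : ℕ), h'')} with hA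
  have hclosed : ∀ x ∈ D, ∀ y ∈ D, (GS S).Adj x y → x ∈ A → y ∈ A := by
    intro x hxD y hyD hadj hxA
    obtain ⟨hx, hhx, hpx⟩ := hxA
    rcases adj_cases S hadj with ⟨rfl, -⟩ | ⟨rfl, br, hb⟩ | ⟨br, k, h1, h2⟩ | ⟨br, k, h1, h2⟩
    · rw [posS_root] at hpx; exact absurd hpx (by simp)
    · rw [hb] at hpx
      injection hpx with hpx
      exact absurd (congrArg Prod.snd hpx) (by simp; omega)
    · rw [hpx] at h1
      injection h1 with h1
      have e1 : br = 2 + (s : ℕ) := (congrArg Prod.fst h1).symm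
      have e2 : k = hx := (congrArg Prod.snd h1).symm
      subst e1; subst e2
      exact ⟨k + 1, by omega, h2⟩
    · rw [hpx] at h2
      injection h2 with h2
      have e1 : br = 2 + (s : ℕ) := (congrArg Prod.fst h2).symm
      have e2 : k + 1 = hx := (congrArg Prod.snd h2).symm
      rcases Nat.lt_or_ge h' k with hk | hk
      · exact ⟨k, hk, by rw [h1, e1]⟩
      · have hkk : k = h' := by omega
        subst hkk
        rw [e1] at h1
        have : y = z' := branchS_inj S h1 hz'
        rw [this] at hyD
        exact absurd hyD hz'D
  have := closed_of_connected (GS S) D hconn A hclosed hzD ⟨h, hlt, hz⟩ hroot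
  obtain ⟨h'', _, hcontr⟩ := this
  rw [posS_root] at hcontr
  exact absurd hcontr (by simp)

/-- a district avoiding the root that meets selection branch `s` is contained in it -/
lemma subset_branch {D : Finset (VS n m t)}
    (hconn : ((GS S).induce (D : Set (VS n m t))).Connected) (hroot : VS.root ∉ D)
    {z : VS n m t} {s : Fin t} (hz : InB S s z) (hzD : z ∈ D) :
    ∀ b ∈ D, InB S s b := by
  intro b hb
  obtain ⟨h, hz⟩ := hz
  have hclosed : ∀ x ∈ D, ∀ y ∈ D, (GS S).Adj x y → x ∈ {y | InB S s y} → y ∈ {y | InB S s y} := by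
    intro x hxD y hyD hadj hxA
    obtain ⟨hx, hpx⟩ := hxA
    rcases adj_cases S hadj with ⟨rfl, -⟩ | ⟨rfl, -⟩ | ⟨br, k, h1, h2⟩ | ⟨br, k, h1, h2⟩
    · rw [posS_root] at hpx; exact absurd hpx (by simp)
    · exact absurd hyD hroot
    · rw [hpx] at h1
      injection h1 with h1
      have e1 : br = 2 + (s : ℕ) := (congrArg Prod.fst h1).symm
      exact ⟨k + 1, by rw [h2, e1]⟩
    · rw [hpx] at h2
      injection h2 with h2
      have e1 : br = 2 + (s : ℕ) := (congrArg Prod.fst h2).symm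
      exact ⟨k, by rw [h1, e1]⟩
  exact closed_of_connected (GS S) D hconn _ hclosed hzD ⟨h, hz⟩ hb

/-- a district avoiding `c1, c2` containing some `u j` consists of `u`'s only -/
lemma subset_u {D : Finset (VS n m t)}
    (hconn : ((GS S).induce (D : Set (VS n m t))).Connected)
    (hc1 : VS.c1 ∉ D) (hc2 : VS.c2 ∉ D) {j : Fin n} (hu : VS.u j ∈ D) :
    ∀ b ∈ D, ∃ j' : Fin n, b = VS.u j' := by
  intro b hb
  set A : Set (VS n m t) := {y | ∃ j' : Fin n, y = VS.u j'} with hA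
  have hclosed : ∀ x ∈ D, ∀ y ∈ D, (GS S).Adj x y → x ∈ A → y ∈ A := by
    intro x hxD y hyD hadj hxA
    obtain ⟨j', rfl⟩ := hxA
    have hpx : posS S (VS.u j' : VS n m t) = some (0, 2 + (j' : ℕ)) := rfl
    rcases adj_cases S hadj with ⟨h0, -⟩ | ⟨rfl, br, hb'⟩ | ⟨br, k, h1, h2⟩ | ⟨br, k, h1, h2⟩
    · exact absurd h0 (by simp)
    · rw [hpx] at hb'
      injection hb' with hb'
      exact absurd (congrArg Prod.snd hb') (by simp)
    · rw [hpx] at h1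
      injection h1 with h1
      have e1 : br = 0 := (congrArg Prod.fst h1).symm
      have e2 : k = 2 + (j' : ℕ) := (congrArg Prod.snd h1).symm
      rw [e1, e2] at h2
      rcases branch0_char S h2 with ⟨-, hh⟩ | ⟨-, hh⟩ | ⟨j'', hy, -⟩
      · omega
      · omega
      · exact ⟨j'', hy⟩
    · rw [hpx] at h2
      injection h2 with h2
      have e1 : br = 0 := (congrArg Prod.fst h2).symm
      have e2 : k + 1 = 2 + (j' : ℕ) := (congrArg Prod.snd h2).symm
      rw [e1] at h1
      rcases branch0_char S h1 with ⟨hy, hh⟩ | ⟨hy, hh⟩ | ⟨j'', hy, -⟩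
      · rw [hy] at hyD
        omega
      · rw [hy] at hyD
        exact absurd hyD hc2
      · exact ⟨j'', hy⟩
  exact closed_of_connected (GS S) D hconn A hclosed hu ⟨j, rfl⟩ hb

/-- a district avoiding the root containing some `w i` consists of `w`'s only -/
lemma subset_w {D : Finset (VS n m t)}
    (hconn : ((GS S).induce (D : Set (VS n m t))).Connected) (hroot : VS.root ∉ D)
    {i : Fin (t-1)} (hw : VS.w i ∈ D) :
    ∀ b ∈ D, ∃ i' : Fin (t-1), b = VS.w i' := by
  intro b hb
  set A : Set (VS n m t) := {y | ∃ h'', posS S y = some (1, h'')} with hA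
  have hclosed : ∀ x ∈ D, ∀ y ∈ D, (GS S).Adj x y → x ∈ A → y ∈ A := by
    intro x hxD y hyD hadj hxA
    obtain ⟨hx, hpx⟩ := hxA
    rcases adj_cases S hadj with ⟨rfl, -⟩ | ⟨rfl, -⟩ | ⟨br, k, h1, h2⟩ | ⟨br, k, h1, h2⟩
    · rw [posS_root] at hpx; exact absurd hpx (by simp)
    · exact absurd hyD hroot
    · rw [hpx] at h1
      injection h1 with h1
      have e1 : br = 1 := (congrArg Prod.fst h1).symm
      exact ⟨k + 1, by rw [h2, e1]⟩
    · rw [hpx] at h2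
      injection h2 with h2
      have e1 : br = 1 := (congrArg Prod.fst h2).symm
      exact ⟨k, by rw [h1, e1]⟩
  have hbA := closed_of_connected (GS S) D hconn A hclosed hw ⟨(i : ℕ), rfl⟩ hb
  obtain ⟨h'', hb'⟩ := hbA
  obtain ⟨i', hbw, -⟩ := branch1_char S hb'
  exact ⟨i', hbw⟩

end StarAux
namespace StarAux

variable {n m t : ℕ} (S : Fin m → Finset (Fin n))

lemma chi_p_char {z : VS n m t} (h : chiS z = CS.p) : z = VS.c1 ∨ z = VS.c2 := by
  cases z <;> simp_all [chiS]

lemma chi_q_char {z : VS n m t} (h : chiS z = CS.q) :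
    z = VS.root ∨ (∃ i, z = VS.w i) ∨ (∃ s i, z = VS.x s i) := by
  cases z <;> simp_all [chiS]

lemma chi_a_char {z : VS n m t} {j : Fin n} (h : chiS z = CS.a j) :
    z = VS.u j ∨ (∃ s, z = VS.v0 s j) ∨ (∃ s i, z = VS.v s i j) := by
  cases z <;> simp_all [chiS] <;> tauto

lemma chi_b_char {z : VS n m t} {s : Fin t} (h : chiS z = CS.b s) :
    ∃ i, z = VS.y s i := by
  cases z <;> simp_all [chiS]

lemma inB_v0 (s : Fin t) (j : Fin n) : InB S s (VS.v0 s j : VS n m t) := ⟨(j : ℕ), rfl⟩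
lemma inB_x (s : Fin t) (i : Fin m) : InB S s (VS.x s i : VS n m t) :=
  ⟨n + (i : ℕ) * (n+1) + (n - (S i).card), rfl⟩
lemma inB_v (s : Fin t) (i : Fin m) (j : Fin n) : InB S s (VS.v s i j : VS n m t) :=
  ⟨n + (i : ℕ) * (n+1) + off S i j, posS_v S s i j⟩
lemma inB_y (s : Fin t) (i : Fin (m+1)) : InB S s (VS.y s i : VS n m t) :=
  ⟨n + m * (n+1) + (i : ℕ), rfl⟩

lemma inB_char {z : VS n m t} {s : Fin t} (h : InB S s z) :
    (∃ j, z = VS.v0 s j) ∨ (∃ i, z = VS.x s i) ∨ (∃ i j, z = VS.v s i j) ∨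
    (∃ i, z = VS.y s i) := by
  obtain ⟨hh, hz⟩ := h
  rcases branchS_char S hz with ⟨j, rfl, -⟩ | ⟨i, rfl, -⟩ | ⟨i, j, rfl, -⟩ | ⟨i, rfl, -⟩
  · exact Or.inl ⟨j, rfl⟩
  · exact Or.inr (Or.inl ⟨i, rfl⟩)
  · exact Or.inr (Or.inr (Or.inl ⟨i, j, rfl⟩))
  · exact Or.inr (Or.inr (Or.inr ⟨i, rfl⟩))

lemma not_inB_root (s : Fin t) : ¬ InB S s (VS.root : VS n m t) := by
  rintro ⟨h, hh⟩; rw [posS_root] at hh; simp at hh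

lemma not_inB_c1 (s : Fin t) : ¬ InB S s (VS.c1 : VS n m t) := by
  rintro ⟨h, hh⟩
  have : posS S (VS.c1 : VS n m t) = some (0, 0) := rfl
  rw [this] at hh
  injection hh with hh
  have := congrArg Prod.fst hh
  simp only at this
  omega

lemma not_inB_c2 (s : Fin t) : ¬ InB S s (VS.c2 : VS n m t) := by
  rintro ⟨h, hh⟩
  have : posS S (VS.c2 : VS n m t) = some (0, 1) := rfl
  rw [this] at hh
  injection hh with hh
  have := congrArg Prod.fst hh
  simp only at this
  omega

lemma not_inB_u (s : Fin t) (j : Fin n) : ¬ InB S s (VS.u j : VS n m t) := by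
  rintro ⟨h, hh⟩
  have : posS S (VS.u j : VS n m t) = some (0, 2 + (j : ℕ)) := rfl
  rw [this] at hh
  injection hh with hh
  have := congrArg Prod.fst hh
  simp only at this
  omega

lemma not_inB_w (s : Fin t) (i : Fin (t-1)) : ¬ InB S s (VS.w i : VS n m t) := by
  rintro ⟨h, hh⟩
  have : posS S (VS.w i : VS n m t) = some (1, (i : ℕ)) := rfl
  rw [this] at hh
  injection hh with hh
  have := congrArg Prod.fst hh
  simp only at this
  omega

lemma inB_branch_eq {s s' : Fin t} {z : VS n m t} (h : InB S s z) (h' : InB S s' z) :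
    s = s' := by
  obtain ⟨h1, hz1⟩ := h
  obtain ⟨h2, hz2⟩ := h'
  rw [hz1] at hz2
  injection hz2 with hz2
  have := congrArg Prod.fst hz2
  simp only at this
  exact Fin.val_injective (by omega)

/-- counting: `b s` has at most `m+1` voters anywhere -/
lemma cnt_b_le (s : Fin t) (D : Finset (VS n m t)) :
    cnt chiS (CS.b s) D ≤ m + 1 := by
  have h1 : cnt chiS (CS.b s) D ≤
      ((Finset.univ : Finset (Fin (m+1))).image (fun i => (VS.y s i : VS n m t))).card := by
    refine cnt_subset chiS ?_
    intro z hz hchi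
    obtain ⟨i, rfl⟩ := chi_b_char hchi
    exact Finset.mem_image.mpr ⟨i, Finset.mem_univ i, rfl⟩
  calc cnt chiS (CS.b s) D ≤ _ := h1
    _ ≤ (Finset.univ : Finset (Fin (m+1))).card := Finset.card_image_le
    _ = m + 1 := by simp

lemma cnt_p_zero (D : Finset (VS n m t)) (hc1 : VS.c1 ∉ D) (hc2 : VS.c2 ∉ D) :
    cnt chiS CS.p D = 0 := by
  refine cnt_eq_zero chiS ?_
  intro z hz hchi
  rcases chi_p_char hchi with rfl | rfl
  · exact hc1 hz
  · exact hc2 hz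

/-- counting within a branch -/
lemma cnt_q_branch {s : Fin t} (D : Finset (VS n m t)) (hD : ∀ z ∈ D, InB S s z) :
    cnt chiS CS.q D ≤ m := by
  have h1 : cnt chiS CS.q D ≤
      ((Finset.univ : Finset (Fin m)).image (fun i => (VS.x s i : VS n m t))).card := by
    refine cnt_subset chiS ?_
    intro z hz hchi
    rcases chi_q_char hchi with rfl | ⟨i, rfl⟩ | ⟨s', i, rfl⟩
    · exact absurd (hD _ hz) (not_inB_root S s)
    · exact absurd (hD _ hz) (not_inB_w S s i)
    · have : s' = s := (inB_branch_eq S (inB_x S s' i) (hD _ hz))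
      subst this
      exact Finset.mem_image.mpr ⟨i, Finset.mem_univ i, rfl⟩
  calc cnt chiS CS.q D ≤ _ := h1
    _ ≤ (Finset.univ : Finset (Fin m)).card := Finset.card_image_le
    _ = m := by simp

lemma cnt_a_branch {s : Fin t} {j : Fin n} (D : Finset (VS n m t))
    (hD : ∀ z ∈ D, InB S s z) :
    cnt chiS (CS.a j) D ≤ m + 1 := by
  have h1 : cnt chiS (CS.a j) D ≤
      (insert (VS.v0 s j) ((Finset.univ : Finset (Fin m)).image
        (fun i => (VS.v s i j : VS n m t)))).card := by
    refine cnt_subset chiS ?_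
    intro z hz hchi
    rcases chi_a_char hchi with rfl | ⟨s', rfl⟩ | ⟨s', i, rfl⟩
    · exact absurd (hD _ hz) (not_inB_u S s j)
    · have : s' = s := (inB_branch_eq S (inB_v0 S s' j) (hD _ hz))
      subst this
      exact Finset.mem_insert_self _ _
    · have : s' = s := (inB_branch_eq S (inB_v S s' i j) (hD _ hz))
      subst this
      exact Finset.mem_insert_of_mem (Finset.mem_image.mpr ⟨i, Finset.mem_univ i, rfl⟩)
  calc cnt chiS (CS.a j) D ≤ _ := h1
    _ ≤ ((Finset.univ : Finset (Fin m)).image (fun i => (VS.v s i j : VS n m t))).card + 1 :=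
        Finset.card_insert_le _ _
    _ ≤ (Finset.univ : Finset (Fin m)).card + 1 := by
        exact Nat.add_le_add_right Finset.card_image_le 1
    _ = m + 1 := by simp

lemma cnt_b_branch_ne {s s' : Fin t} (hss : s' ≠ s) (D : Finset (VS n m t))
    (hD : ∀ z ∈ D, InB S s z) :
    cnt chiS (CS.b s') D = 0 := by
  refine cnt_eq_zero chiS ?_
  intro z hz hchi
  obtain ⟨i, rfl⟩ := chi_b_char hchi
  exact hss (inB_branch_eq S (inB_y S s' i) (hD _ hz))

lemma cnt_p_branch {s : Fin t} (D : Finset (VS n m t)) (hD : ∀ z ∈ D, InB S s z) :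
    cnt chiS CS.p D = 0 := by
  refine cnt_p_zero D (fun h => ?_) (fun h => ?_)
  · exact not_inB_c1 S s (hD _ h)
  · exact not_inB_c2 S s (hD _ h)

end StarAux
open StarAux in
/-- backward direction of Theorem 2.  Let `(U, F, t)` be a Set Cover
instance in which every element belongs to at least one set.  If the subdivided-star
gerrymandering instance constructed from `(U, F, t)` admits a district-partition into
`k = t + 4` districts that is satisfying for the preferred candidate `p`, then there exists
`X ⊆ F` with `|X| ≤ t` and `∪_{S ∈ X} S = U`. -/
theorem star_gerrymander_imp_cover (n m t : ℕ) (ht : 1 ≤ t) (htm : t ≤ m)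
    (S : Fin m → Finset (Fin n))
    (hcov : ∀ j : Fin n, ∃ i : Fin m, j ∈ S i)
    (hgerry : ∃ P : Finset (Finset (VS n m t)),
      IsDistrictPartition (GS S) (t + 4) P ∧ SatisfyingFor chiS CS.p P) :
    ∃ X : Finset (Fin m), X.card ≤ t ∧ ∀ j : Fin n, ∃ i ∈ X, j ∈ S i := by
  classical
  obtain ⟨P, ⟨hcard, hne, hdisj, hcov', hconn⟩, hsat⟩ := hgerry
  -- any subfamily whose members all contain c1 or c2 has at most 2 members
  have key2 : ∀ F : Finset (Finset (VS n m t)), F ⊆ P →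
      (∀ D ∈ F, VS.c1 ∈ D ∨ VS.c2 ∈ D) → F.card ≤ 2 := by
    intro F hFP hF
    have h2 : F.card ≤ ({VS.c1, VS.c2} : Finset (VS n m t)).card := by
      apply Finset.card_le_card_of_injOn (fun D => if VS.c1 ∈ D then VS.c1 else VS.c2)
      · intro D hD
        by_cases h : VS.c1 ∈ D <;> simp [h]
      · intro D hD D' hD' heq
        by_contra hne'
        have hdisj' := hdisj D (hFP hD) D' (hFP hD') hne'
        by_cases h1 : VS.c1 ∈ D <;> by_cases h2 : VS.c1 ∈ D' <;>
          simp only [h1, h2, if_true, if_false] at heq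
        · exact (Finset.disjoint_left.mp hdisj' h1) h2
        · exact absurd heq (by simp)
        · exact absurd heq (by simp)
        · have hc2D : VS.c2 ∈ D := (hF D hD).resolve_left h1
          have hc2D' : VS.c2 ∈ D' := (hF D' hD').resolve_left h2
          exact (Finset.disjoint_left.mp hdisj' hc2D) hc2D'
    calc F.card ≤ _ := h2
      _ ≤ 2 := by
        refine le_trans (Finset.card_insert_le _ _) ?_
        simp
  -- any winning district contains c1 or c2
  have hwin_mem : ∀ D ∈ P, winsIn chiS CS.p D → VS.c1 ∈ D ∨ VS.c2 ∈ D := by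
    intro D hD hwin
    rw [winsIn_iff] at hwin
    have hp1 : 1 ≤ cnt chiS CS.p D := by
      obtain ⟨z, hz⟩ := hne D hD
      by_cases hzp : chiS z = CS.p
      · exact one_le_cnt chiS hz hzp
      · have := hwin (chiS z) hzp
        have h1 : 1 ≤ cnt chiS (chiS z) D := one_le_cnt chiS hz rfl
        omega
    obtain ⟨z, hz1, hz2⟩ := cnt_pos_elim chiS hp1
    rcases chi_p_char hz2 with rfl | rfl
    · exact Or.inl hz1
    · exact Or.inr hz1
  set Wn := P.filter (fun D => winsIn chiS CS.p D) with hWn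
  have hWle : Wn.card ≤ 2 := by
    refine key2 Wn (Finset.filter_subset _ _) ?_
    intro D hD
    rw [hWn, Finset.mem_filter] at hD
    exact hwin_mem D hD.1 hD.2
  -- there is a district avoiding c1 and c2
  have hD0 : ∃ D0 ∈ P, VS.c1 ∉ D0 ∧ VS.c2 ∉ D0 := by
    by_contra hcon
    push_neg at hcon
    have : P.card ≤ 2 := by
      refine key2 P (subset_refl _) ?_
      intro D hD
      by_cases h : VS.c1 ∈ D
      · exact Or.inl h
      · exact Or.inr (hcon D hD h)
    omega
  have hWge : 2 ≤ Wn.card := by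
    by_contra hlt
    push_neg at hlt
    obtain ⟨D0, hD0P, hD0c1, hD0c2⟩ := hD0
    obtain ⟨c0, hc0lead, hc0cnt⟩ := exists_leader chiS D0 (hne D0 hD0P)
    have hc0p : c0 ≠ CS.p := by
      intro h
      subst h
      rw [cnt_p_zero D0 hD0c1 hD0c2] at hc0cnt
      omega
    have := hsat c0 hc0p
    rw [← hWn] at this
    have h1 : 1 ≤ (P.filter fun D => leadsIn chiS c0 D).card :=
      Finset.card_pos.mpr ⟨D0, Finset.mem_filter.mpr ⟨hD0P, hc0lead⟩⟩
    omega
  have hW2 : Wn.card = 2 := le_antisymm hWle hWge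
  -- the lead budget: every non-p candidate leads at most one district
  have hbud : ∀ c' : CS n t, c' ≠ CS.p → ∀ D ∈ P, ∀ D' ∈ P,
      leadsIn chiS c' D → leadsIn chiS c' D' → D = D' := by
    intro c' hc' D hD D' hD' h1 h2
    have hle : (P.filter fun D => leadsIn chiS c' D).card ≤ 1 := by
      have := hsat c' hc'
      rw [← hWn] at this
      omega
    exact Finset.card_le_one.mp hle D (Finset.mem_filter.mpr ⟨hD, h1⟩)
      D' (Finset.mem_filter.mpr ⟨hD', h2⟩)
  -- the two winning districts are {c1} and {c2}
  have hsingle : ∀ D ∈ P, winsIn chiS CS.p D → ∀ z : VS n m t,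
      chiS z = CS.p → z ∈ D →
      (∀ w : VS n m t, chiS w = CS.p → w ∈ D → w = z) → D = {z} := by
    intro D hD hwin z hzp hzD huniq
    rw [winsIn_iff] at hwin
    have hcnt : cnt chiS CS.p D ≤ 1 := by
      refine cnt_subset chiS (T := {z}) ?_
      intro w hw hwp
      exact Finset.mem_singleton.mpr (huniq w hwp hw)
    refine Finset.Subset.antisymm ?_ (Finset.singleton_subset_iff.mpr hzD)
    intro w hwD
    rw [Finset.mem_singleton]
    by_contra hwz
    have hwp : chiS w ≠ CS.p := by
      intro h
      exact hwz (huniq w h hwD)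
    have := hwin (chiS w) hwp
    have h1 : 1 ≤ cnt chiS (chiS w) D := one_le_cnt chiS hwD rfl
    omega
  have hc1c2P : ({VS.c1} : Finset (VS n m t)) ∈ P ∧ ({VS.c2} : Finset (VS n m t)) ∈ P := by
    obtain ⟨D1, hD1, D2, hD2, hD12⟩ := Finset.one_lt_card.mp (by omega : 1 < Wn.card)
    rw [hWn, Finset.mem_filter] at hD1 hD2
    obtain ⟨hD1P, hD1w⟩ := hD1
    obtain ⟨hD2P, hD2w⟩ := hD2
    have hdisj12 := hdisj D1 hD1P D2 hD2P hD12
    have hmem1 := hwin_mem D1 hD1P hD1w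
    have hmem2 := hwin_mem D2 hD2P hD2w
    -- helper to make a singleton
    have mk : ∀ D ∈ P, winsIn chiS CS.p D → ∀ z : VS n m t, (z = VS.c1 ∨ z = VS.c2) →
        z ∈ D → (VS.c1 ∈ D → z = VS.c1) → (VS.c2 ∈ D → z = VS.c2) → D = {z} := by
      intro D hD hw z hzc hzD h1 h2
      refine hsingle D hD hw z ?_ hzD ?_
      · rcases hzc with rfl | rfl <;> rfl
      · intro w hwp hwD
        rcases chi_p_char hwp with rfl | rfl
        · exact (h1 hwD).symm
        · exact (h2 hwD).symm
    rcases hmem1 with h1 | h1 <;> rcases hmem2 with h2 | h2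
    · exact absurd h2 (Finset.disjoint_left.mp hdisj12 h1)
    · have e1 : D1 = {VS.c1} := by
        refine mk D1 hD1P hD1w VS.c1 (Or.inl rfl) h1 (fun _ => rfl) (fun hc => ?_)
        exact absurd h2 (fun hh => (Finset.disjoint_left.mp hdisj12 hc) hh)
      have e2 : D2 = {VS.c2} := by
        refine mk D2 hD2P hD2w VS.c2 (Or.inr rfl) h2 (fun hc => ?_) (fun _ => rfl)
        exact absurd h1 (fun hh => (Finset.disjoint_right.mp hdisj12 hc) hh)
      exact ⟨e1 ▸ hD1P, e2 ▸ hD2P⟩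
    · have e1 : D1 = {VS.c2} := by
        refine mk D1 hD1P hD1w VS.c2 (Or.inr rfl) h1 (fun hc => ?_) (fun _ => rfl)
        exact absurd h2 (fun hh => (Finset.disjoint_left.mp hdisj12 hc) hh)
      have e2 : D2 = {VS.c1} := by
        refine mk D2 hD2P hD2w VS.c1 (Or.inl rfl) h2 (fun _ => rfl) (fun hc => ?_)
        exact absurd h1 (fun hh => (Finset.disjoint_right.mp hdisj12 hc) hh)
      exact ⟨e2 ▸ hD2P, e1 ▸ hD1P⟩
    · exact absurd h2 (Finset.disjoint_left.mp hdisj12 h1)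
  obtain ⟨hc1P, hc2P⟩ := hc1c2P
  
  have hc1_not : ∀ D ∈ P, D ≠ {VS.c1} → VS.c1 ∉ D := by
    intro D hD hne'
    exact Finset.disjoint_left.mp (hdisj _ hc1P D hD (Ne.symm hne')) (Finset.mem_singleton_self _)
  have hc2_not : ∀ D ∈ P, D ≠ {VS.c2} → VS.c2 ∉ D := by
    intro D hD hne'
    exact Finset.disjoint_left.mp (hdisj _ hc2P D hD (Ne.symm hne')) (Finset.mem_singleton_self _)
  -- the district of `u j` consists of `u`'s and is led by `a j`
  have hDu : ∀ j : Fin n, ∃ Dj ∈ P, VS.u j ∈ Dj ∧ leadsIn chiS (CS.a j) Dj ∧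
      (∀ z ∈ Dj, ∃ j' : Fin n, z = VS.u j') := by
    intro j
    obtain ⟨Dj, hDjP, hjDj⟩ := hcov' (VS.u j)
    have h1 : Dj ≠ {VS.c1} := by
      intro h; rw [h, Finset.mem_singleton] at hjDj; exact absurd hjDj (by simp)
    have h2 : Dj ≠ {VS.c2} := by
      intro h; rw [h, Finset.mem_singleton] at hjDj; exact absurd hjDj (by simp)
    have hsubu := subset_u S (hconn Dj hDjP) (hc1_not Dj hDjP h1) (hc2_not Dj hDjP h2) hjDj
    refine ⟨Dj, hDjP, hjDj, ?_, hsubu⟩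
    rw [leadsIn_iff]
    intro c'
    have hge : 1 ≤ cnt chiS (CS.a j) Dj := one_le_cnt chiS hjDj rfl
    have hle : cnt chiS c' Dj ≤ 1 := by
      refine cnt_le_one chiS ?_
      intro w hw w' hw' hwc hw'c
      obtain ⟨j1, rfl⟩ := hsubu w hw
      obtain ⟨j2, rfl⟩ := hsubu w' hw'
      have h12 : (CS.a j1 : CS n t) = CS.a j2 := by
        rw [show (chiS (VS.u j1) : CS n t) = CS.a j1 from rfl] at hwc
        rw [show (chiS (VS.u j2) : CS n t) = CS.a j2 from rfl] at hw'c
        rw [hwc, hw'c]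
      have : j1 = j2 := by simpa using h12
      rw [this]
    omega
  -- only u-districts can be led by `a j`
  have ha_only : ∀ (j : Fin n), ∀ D ∈ P, leadsIn chiS (CS.a j) D →
      ∀ z ∈ D, ∃ j' : Fin n, z = VS.u j' := by
    intro j D hD hlead
    obtain ⟨Dj, hDjP, hjDj, hDjlead, hsubu⟩ := hDu j
    have hDD : D = Dj := hbud (CS.a j) (by simp) D hD Dj hDjP hlead hDjlead
    intro z hz
    exact hsubu z (hDD ▸ hz)
  -- the root district
  obtain ⟨Dr, hDrP, hrootDr⟩ := hcov' VS.root
  have hDrc1 : VS.c1 ∉ Dr := hc1_not Dr hDrP (by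
    intro h; rw [h, Finset.mem_singleton] at hrootDr; exact absurd hrootDr (by simp))
  have hDrc2 : VS.c2 ∉ Dr := hc2_not Dr hDrP (by
    intro h; rw [h, Finset.mem_singleton] at hrootDr; exact absurd hrootDr (by simp))
  have hq1 : 1 ≤ cnt chiS CS.q Dr := one_le_cnt chiS hrootDr rfl
  have hqb : ∀ s : Fin t, cnt chiS (CS.b s) Dr ≤ cnt chiS CS.q Dr := by
    intro s
    by_cases h0 : 1 ≤ cnt chiS (CS.b s) Dr
    swap
    · omega
    obtain ⟨z, hzDr, hzchi⟩ := cnt_pos_elim chiS h0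
    obtain ⟨i, rfl⟩ := chi_b_char hzchi
    have hx_all : ∀ i' : Fin m, VS.x s i' ∈ Dr := by
      intro i'
      refine mem_of_le_height S (hconn Dr hDrP) hrootDr
        (z := VS.y s i) (z' := VS.x s i') rfl hzDr rfl ?_
      exact group_lt_y i' (by omega) (i : ℕ)
    have hcardins : (insert VS.root ((Finset.univ : Finset (Fin m)).image
        fun i' => (VS.x s i' : VS n m t))).card = m + 1 := by
      rw [Finset.card_insert_of_notMem (by simp),
        Finset.card_image_of_injective _ (fun a b hab => by simpa using hab)]
      simp
    have hsubq : m + 1 ≤ cnt chiS CS.q Dr := by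
      rw [← hcardins]
      refine le_cnt_of_subset chiS ?_ ?_
      · intro z hz
        rcases Finset.mem_insert.mp hz with rfl | hz
        · exact hrootDr
        · obtain ⟨i', -, rfl⟩ := Finset.mem_image.mp hz
          exact hx_all i'
      · intro z hz
        rcases Finset.mem_insert.mp hz with rfl | hz
        · rfl
        · obtain ⟨i', -, rfl⟩ := Finset.mem_image.mp hz
          rfl
    have := cnt_b_le (t := t) s Dr
    omega
  have hanl : ∀ j : Fin n, ¬ leadsIn chiS (CS.a j) Dr := by
    intro j hl
    obtain ⟨j', hj'⟩ := ha_only j Dr hDrP hl VS.root hrootDr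
    exact absurd hj' (by simp)
  have hqlead : leadsIn chiS CS.q Dr := by
    obtain ⟨c0, hl, hc⟩ := exists_leader chiS Dr (hne Dr hDrP)
    cases c0 with
    | p => rw [cnt_p_zero (t := t) Dr hDrc1 hDrc2] at hc; omega
    | q => exact hl
    | a j => exact absurd hl (hanl j)
    | b s =>
      rw [leadsIn_iff] at hl ⊢
      intro c'
      exact le_trans (hl c') (hqb s)
  have hqa : ∀ j : Fin n, cnt chiS (CS.a j) Dr < cnt chiS CS.q Dr := by
    intro j
    have h1 := hanl j
    rw [leadsIn_iff] at h1
    push_neg at h1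
    obtain ⟨c', hc'⟩ := h1
    have := (leadsIn_iff chiS CS.q Dr).mp hqlead c'
    omega
  have hq_unique : ∀ D ∈ P, leadsIn chiS CS.q D → D = Dr := by
    intro D hD hl
    exact hbud CS.q (by simp) D hD Dr hDrP hl hqlead
  have hwDr : ∀ i : Fin (t-1), VS.w i ∈ Dr := by
    intro i
    by_contra hwi
    obtain ⟨W, hWP, hwW⟩ := hcov' (VS.w i)
    have hWne : W ≠ Dr := by rintro rfl; exact hwi hwW
    have hrootW : VS.root ∉ W := by
      intro h
      exact Finset.disjoint_left.mp (hdisj W hWP Dr hDrP hWne) h hrootDr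
    have hsubw := subset_w S (hconn W hWP) hrootW hwW
    have hlW : leadsIn chiS CS.q W := by
      rw [leadsIn_iff]
      intro c'
      have h1 : cnt chiS c' W ≤ W.card := cnt_le_card chiS c' W
      have h2 : W.card ≤ cnt chiS CS.q W :=
        le_cnt_of_subset chiS (fun z hz => hz)
          (fun z hz => by obtain ⟨i', rfl⟩ := hsubw z hz; rfl)
      omega
    exact hWne (hq_unique W hWP hlW)
  -- districts other than Dr meeting a branch are inside it and led by its b
  have hbranch : ∀ B ∈ P, B ≠ Dr → ∀ z ∈ B, ∀ s : Fin t, InB S s z →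
      (∀ b' ∈ B, InB S s b') ∧ leadsIn chiS (CS.b s) B := by
    intro B hBP hBne z hzB s hz
    have hrootB : VS.root ∉ B := by
      intro h
      exact Finset.disjoint_left.mp (hdisj B hBP Dr hDrP hBne) h hrootDr
    have hsub := subset_branch S (hconn B hBP) hrootB hz hzB
    refine ⟨hsub, ?_⟩
    obtain ⟨c0, hl, hc⟩ := exists_leader chiS B (hne B hBP)
    cases c0 with
    | p => rw [cnt_p_branch S B hsub] at hc; omega
    | q => exact absurd (hq_unique B hBP hl) hBne
    | a j =>
      obtain ⟨j', hj'⟩ := ha_only j B hBP hl z hzB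
      rw [hj'] at hz
      exact absurd hz (not_inB_u S s j')
    | b s' =>
      by_cases hss : s' = s
      · rw [hss] at hl; exact hl
      · rw [cnt_b_branch_ne S hss B hsub] at hc; omega
  have hbr_uniq : ∀ s : Fin t, ∀ B ∈ P, ∀ B' ∈ P, B ≠ Dr → B' ≠ Dr →
      ∀ z ∈ B, ∀ z' ∈ B', InB S s z → InB S s z' → B = B' := by
    intro s B hBP B' hB'P hBne hB'ne z hzB z' hz'B hz hz'
    have h1 := (hbranch B hBP hBne z hzB s hz).2
    have h2 := (hbranch B' hB'P hB'ne z' hz'B s hz').2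
    exact hbud (CS.b s) (by simp) B hBP B' hB'P h1 h2
  
  -- the cover set: for each branch, the largest x-index inside Dr (if any)
  refine ⟨Finset.univ.biUnion (fun s : Fin t =>
      if h : (Finset.univ.filter (fun i : Fin m => VS.x s i ∈ Dr)).Nonempty
      then {(Finset.univ.filter (fun i : Fin m => VS.x s i ∈ Dr)).max' h} else (∅ : Finset (Fin m))), ?_, ?_⟩
  · refine le_trans Finset.card_biUnion_le ?_
    have hb : ∀ s ∈ (Finset.univ : Finset (Fin t)),
        (if h : (Finset.univ.filter (fun i : Fin m => VS.x s i ∈ Dr)).Nonempty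
          then {(Finset.univ.filter (fun i : Fin m => VS.x s i ∈ Dr)).max' h} else (∅ : Finset (Fin m))).card ≤ 1 := by
      intro s _
      split <;> simp
    calc ∑ s : Fin t, (if h : (Finset.univ.filter (fun i : Fin m => VS.x s i ∈ Dr)).Nonempty
            then {(Finset.univ.filter (fun i : Fin m => VS.x s i ∈ Dr)).max' h} else (∅ : Finset (Fin m))).card
        ≤ ∑ _s : Fin t, 1 := Finset.sum_le_sum hb
      _ = t := by simp
  intro j
  -- counting q and a_j votes in Dr
  have G1 : cnt chiS CS.q Dr ≤
      t + ∑ s : Fin t, (Dr.filter fun z => ∃ i : Fin m, z = VS.x s i).card := by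
    have hstep : cnt chiS CS.q Dr ≤ (insert VS.root
        (((Finset.univ : Finset (Fin (t-1))).image fun i => (VS.w i : VS n m t)) ∪
          Finset.univ.biUnion (fun s : Fin t =>
            Dr.filter fun z => ∃ i : Fin m, z = VS.x s i))).card := by
      refine cnt_subset chiS ?_
      intro z hz hchi
      rcases chi_q_char hchi with rfl | ⟨i, rfl⟩ | ⟨s, i, rfl⟩
      · exact Finset.mem_insert_self _ _
      · exact Finset.mem_insert_of_mem (Finset.mem_union_left _
          (Finset.mem_image.mpr ⟨i, Finset.mem_univ i, rfl⟩))
      · exact Finset.mem_insert_of_mem (Finset.mem_union_right _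
          (Finset.mem_biUnion.mpr ⟨s, Finset.mem_univ s,
            Finset.mem_filter.mpr ⟨hz, ⟨i, rfl⟩⟩⟩))
    have h1 := Finset.card_insert_le (VS.root : VS n m t)
        (((Finset.univ : Finset (Fin (t-1))).image fun i => (VS.w i : VS n m t)) ∪
          Finset.univ.biUnion (fun s : Fin t =>
            Dr.filter fun z => ∃ i : Fin m, z = VS.x s i))
    have h2 := Finset.card_union_le
        (((Finset.univ : Finset (Fin (t-1))).image fun i => (VS.w i : VS n m t)))
        (Finset.univ.biUnion (fun s : Fin t =>
            Dr.filter fun z => ∃ i : Fin m, z = VS.x s i))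
    have h3 : (((Finset.univ : Finset (Fin (t-1))).image
        fun i => (VS.w i : VS n m t))).card ≤ t - 1 := by
      calc _ ≤ (Finset.univ : Finset (Fin (t-1))).card := Finset.card_image_le
        _ = t - 1 := by simp
    have h4 := Finset.card_biUnion_le (s := (Finset.univ : Finset (Fin t)))
      (t := fun s => Dr.filter fun z => ∃ i : Fin m, z = VS.x s i)
    omega
  have G2 : ∑ s : Fin t, (Dr.filter fun z => chiS z = CS.a j ∧ InB S s z).card ≤
      cnt chiS (CS.a j) Dr := by
    have hdisjb : ∀ s ∈ (Finset.univ : Finset (Fin t)), ∀ s' ∈ Finset.univ, s ≠ s' →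
        Disjoint (Dr.filter fun z => chiS z = CS.a j ∧ InB S s z)
          (Dr.filter fun z => chiS z = CS.a j ∧ InB S s' z) := by
      intro s _ s' _ hss
      refine Finset.disjoint_left.mpr ?_
      intro z hz hz'
      rw [Finset.mem_filter] at hz hz'
      exact hss (inB_branch_eq S hz.2.2 hz'.2.2)
    rw [← Finset.card_biUnion hdisjb]
    refine le_cnt_of_subset chiS ?_ ?_
    · intro z hz
      rw [Finset.mem_biUnion] at hz
      obtain ⟨s, -, hz⟩ := hz
      exact (Finset.mem_filter.mp hz).1
    · intro z hz
      rw [Finset.mem_biUnion] at hz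
      obtain ⟨s, -, hz⟩ := hz
      exact (Finset.mem_filter.mp hz).2.1
  have hsum : ∑ s : Fin t, (Dr.filter fun z => chiS z = CS.a j ∧ InB S s z).card <
      ∑ s : Fin t, ((Dr.filter fun z => ∃ i : Fin m, z = VS.x s i).card + 1) := by
    have e : ∑ s : Fin t, ((Dr.filter fun z => ∃ i : Fin m, z = VS.x s i).card + 1)
        = (∑ s : Fin t, (Dr.filter fun z => ∃ i : Fin m, z = VS.x s i).card) + t := by
      rw [Finset.sum_add_distrib]
      simp
    have := hqa j
    omega
  obtain ⟨s, -, hs⟩ := Finset.exists_lt_of_sum_lt hsum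
  have hsle : (Dr.filter fun z => chiS z = CS.a j ∧ InB S s z).card ≤
      (Dr.filter fun z => ∃ i : Fin m, z = VS.x s i).card := by omega
  -- branch s must have an x-vertex inside Dr
  have hIne : (Finset.univ.filter (fun i : Fin m => VS.x s i ∈ Dr)).Nonempty := by
    by_contra hemp
    rw [Finset.not_nonempty_iff_eq_empty] at hemp
    have hqs0 : (Dr.filter fun z => ∃ i : Fin m, z = VS.x s i).card = 0 := by
      rw [Finset.card_eq_zero, Finset.filter_eq_empty_iff]
      rintro z hz ⟨i, rfl⟩
      have hmem : i ∈ Finset.univ.filter (fun i : Fin m => VS.x s i ∈ Dr) :=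
        Finset.mem_filter.mpr ⟨Finset.mem_univ i, hz⟩
      rw [hemp] at hmem
      exact absurd hmem (Finset.notMem_empty i)
    have has0 : (Dr.filter fun z => chiS z = CS.a j ∧ InB S s z).card = 0 := by omega
    have hnotin : ∀ z : VS n m t, chiS z = CS.a j → InB S s z → z ∉ Dr := by
      intro z h1 h2 hzDr
      have hmem : z ∈ Dr.filter fun z => chiS z = CS.a j ∧ InB S s z :=
        Finset.mem_filter.mpr ⟨hzDr, h1, h2⟩
      rw [Finset.card_eq_zero] at has0
      rw [has0] at hmem
      exact absurd hmem (Finset.notMem_empty z)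
    obtain ⟨B, hBP, hvB⟩ := hcov' (VS.v0 s j)
    have hBne : B ≠ Dr := by
      rintro rfl
      exact hnotin (VS.v0 s j) rfl (inB_v0 S s j) hvB
    obtain ⟨hBsub, -⟩ := hbranch B hBP hBne _ hvB s (inB_v0 S s j)
    have hviB : ∀ i : Fin m, VS.v s i j ∈ B := by
      intro i
      obtain ⟨B', hB'P, hvB'⟩ := hcov' (VS.v s i j)
      have hB'ne : B' ≠ Dr := by
        rintro rfl
        exact hnotin (VS.v s i j) rfl (inB_v S s i j) hvB'
      have e := hbr_uniq s B hBP B' hB'P hBne hB'ne _ hvB _ hvB'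
        (inB_v0 S s j) (inB_v S s i j)
      rw [e]
      exact hvB'
    have hins : (insert (VS.v0 s j) ((Finset.univ : Finset (Fin m)).image
        fun i => (VS.v s i j : VS n m t))).card = m + 1 := by
      rw [Finset.card_insert_of_notMem (by simp),
        Finset.card_image_of_injective _ (fun a b hab => by simpa using hab)]
      simp
    have hm1 : m + 1 ≤ cnt chiS (CS.a j) B := by
      rw [← hins]
      refine le_cnt_of_subset chiS ?_ ?_
      · intro z hz
        rcases Finset.mem_insert.mp hz with rfl | hz
        · exact hvB
        · obtain ⟨i, -, rfl⟩ := Finset.mem_image.mp hz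
          exact hviB i
      · intro z hz
        rcases Finset.mem_insert.mp hz with rfl | hz
        · rfl
        · obtain ⟨i, -, rfl⟩ := Finset.mem_image.mp hz
          rfl
    have hlead : leadsIn chiS (CS.a j) B := by
      rw [leadsIn_iff]
      intro c'
      have hcle : cnt chiS c' B ≤ m + 1 := by
        cases c' with
        | p => rw [cnt_p_branch S B hBsub]; omega
        | q => have := cnt_q_branch S B hBsub; omega
        | a j' => exact cnt_a_branch S B hBsub
        | b s' => exact cnt_b_le (t := t) s' B
      omega
    obtain ⟨j', hj'⟩ := ha_only j B hBP hlead _ hvB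
    exact absurd hj' (by simp)
  set isx := (Finset.univ.filter (fun i : Fin m => VS.x s i ∈ Dr)).max' hIne with hisx
  have hxis : VS.x s isx ∈ Dr := by
    have hmem := Finset.max'_mem _ hIne
    rw [← hisx] at hmem
    exact (Finset.mem_filter.mp hmem).2
  have hqsle : (Dr.filter fun z => ∃ i : Fin m, z = VS.x s i).card ≤ (isx : ℕ) + 1 := by
    have hmaps : ∀ z ∈ (Dr.filter fun z => ∃ i : Fin m, z = VS.x s i),
        (fun z : VS n m t => match z with | VS.x _ i => (i : ℕ) | _ => 0) z ∈
          Finset.range ((isx : ℕ) + 1) := by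
      intro z hz
      rw [Finset.mem_filter] at hz
      obtain ⟨hzDr, i, rfl⟩ := hz
      have hmem : i ∈ Finset.univ.filter (fun i : Fin m => VS.x s i ∈ Dr) :=
        Finset.mem_filter.mpr ⟨Finset.mem_univ i, hzDr⟩
      have hle := Finset.le_max' _ i hmem
      rw [← hisx] at hle
      rw [Finset.mem_range]
      show (i : ℕ) < (isx : ℕ) + 1
      have : (i : ℕ) ≤ (isx : ℕ) := hle
      omega
    have hinj : Set.InjOn (fun z : VS n m t => match z with | VS.x _ i => (i : ℕ) | _ => 0)
        (Dr.filter fun z => ∃ i : Fin m, z = VS.x s i) := by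
      intro z hz z' hz' he
      simp only [Finset.coe_filter, Set.mem_setOf_eq] at hz hz'
      obtain ⟨-, i, rfl⟩ := hz
      obtain ⟨-, i', rfl⟩ := hz'
      have : (i : ℕ) = (i' : ℕ) := he
      have : i = i' := Fin.val_injective this
      rw [this]
    have := Finset.card_le_card_of_injOn _ hmaps hinj
    simpa using this
  -- the key cover step
  have hjS : j ∈ S isx := by
    by_contra hj
    have hxpos : posS S (VS.x s isx : VS n m t) =
        some (2 + (s : ℕ), n + (isx : ℕ) * (n+1) + (n - (S isx).card)) := rfl
    set fk : ℕ → VS n m t := fun k =>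
      if hk : k < (isx : ℕ) then VS.v s ⟨k, lt_trans hk isx.isLt⟩ j
      else if k = (isx : ℕ) then VS.v0 s j else VS.v s isx j with hfk
    have hmaps : ∀ k ∈ Finset.range ((isx : ℕ) + 2),
        fk k ∈ Dr.filter fun z => chiS z = CS.a j ∧ InB S s z := by
      intro k hk
      rw [Finset.mem_range] at hk
      rw [hfk]
      by_cases h1 : k < (isx : ℕ)
      · simp only [dif_pos h1]
        refine Finset.mem_filter.mpr ⟨?_, rfl, inB_v S s _ j⟩
        refine mem_of_le_height S (hconn Dr hDrP) hrootDr hxpos hxis (posS_v S s _ j) ?_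
        exact blocks_lt _ _ (off_le S _ j) h1
      · simp only [dif_neg h1]
        by_cases h2 : k = (isx : ℕ)
        · simp only [if_pos h2]
          refine Finset.mem_filter.mpr ⟨?_, rfl, inB_v0 S s j⟩
          refine mem_of_le_height S (hconn Dr hDrP) hrootDr hxpos hxis rfl ?_
          have := j.isLt
          omega
        · simp only [if_neg h2]
          refine Finset.mem_filter.mpr ⟨?_, rfl, inB_v S s isx j⟩
          refine mem_of_le_height S (hconn Dr hDrP) hrootDr hxpos hxis (posS_v S s isx j) ?_
          have := off_lt_x S hj
          omega
    have hinj : Set.InjOn fk (Finset.range ((isx : ℕ) + 2)) := by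
      intro k hk k' hk' he
      rw [hfk] at he
      simp only at he
      by_cases h1 : k < (isx : ℕ) <;> by_cases h1' : k' < (isx : ℕ)
      · rw [dif_pos h1, dif_pos h1'] at he
        simpa using he
      · rw [dif_pos h1, dif_neg h1'] at he
        by_cases h2' : k' = (isx : ℕ)
        · rw [if_pos h2'] at he
          exact absurd he (by simp)
        · rw [if_neg h2'] at he
          have h3 : (⟨k, lt_trans h1 isx.isLt⟩ : Fin m) = isx := by simpa using he
          have : k = (isx : ℕ) := congrArg Fin.val h3
          omega
      · rw [dif_neg h1, dif_pos h1'] at he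
        by_cases h2 : k = (isx : ℕ)
        · rw [if_pos h2] at he
          exact absurd he (by simp)
        · rw [if_neg h2] at he
          have h3 : isx = (⟨k', lt_trans h1' isx.isLt⟩ : Fin m) := by simpa using he
          have : (isx : ℕ) = k' := congrArg Fin.val h3
          omega
      · rw [dif_neg h1, dif_neg h1'] at he
        simp only [Finset.coe_range, Set.mem_Iio] at hk hk'
        by_cases h2 : k = (isx : ℕ) <;> by_cases h2' : k' = (isx : ℕ)
        · omega
        · rw [if_pos h2, if_neg h2'] at he
          exact absurd he (by simp)
        · rw [if_neg h2, if_pos h2'] at he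
          exact absurd he (by simp)
        · omega
    have hge := Finset.card_le_card_of_injOn fk hmaps hinj
    rw [Finset.card_range] at hge
    omega
  refine ⟨isx, ?_, hjS⟩
  refine Finset.mem_biUnion.mpr ⟨s, Finset.mem_univ s, ?_⟩
  rw [dif_pos hIne]
  rw [hisx]
  exact Finset.mem_singleton_self _
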